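/- arXiv:0910.0277 — 3 statements merged into one kernel-verified Lean document; each statement's English description precedes it below -/
import Mathlib

section
/- Let 1 ≤ p ≤ 2 and let u, v, w, x be elements of a real L_p space (for instance L_p(μ) for a measure μ, or the sequence space ℓ_p). Then ‖u − w‖_p² + (p − 1)‖x − v‖_p² ≤ ‖u − v‖_p² + ‖v − w‖_p² + ‖x − w‖_p² + ‖u − x‖_p². -/
open MeasureTheory

open Real Set
open scoped ENNReal NNReal


/-- AM-GM step: for `t ≤ 0` and `r ∈ (0,1)`, `2 ≤ (1+r)^t + (1-r)^t`. -/
lemma amgm_step {t r : ℝ} (ht : t ≤ 0) (hr0 : 0 < r) (hr1 : r < 1) :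
    2 ≤ (1 + r) ^ t + (1 - r) ^ t := by
  have h1 : (0:ℝ) < 1 + r := by linarith
  have h2 : (0:ℝ) < 1 - r := by linarith
  have key : 2 * Real.sqrt ((1 + r) ^ t * (1 - r) ^ t) ≤ (1 + r) ^ t + (1 - r) ^ t := by
    have := two_mul_le_add_sq (Real.sqrt ((1 + r) ^ t)) (Real.sqrt ((1 - r) ^ t))
    have e1 : Real.sqrt ((1+r)^t) ^ 2 = (1+r)^t := Real.sq_sqrt (rpow_nonneg h1.le t)
    have e2 : Real.sqrt ((1-r)^t) ^ 2 = (1-r)^t := Real.sq_sqrt (rpow_nonneg h2.le t)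
    have e3 : Real.sqrt ((1+r)^t) * Real.sqrt ((1-r)^t) = Real.sqrt ((1+r)^t * (1-r)^t) :=
      (Real.sqrt_mul (rpow_nonneg h1.le t) _).symm
    nlinarith [this]
  have hprod : (1 + r) ^ t * (1 - r) ^ t = ((1+r)*(1-r)) ^ t :=
    (Real.mul_rpow h1.le h2.le).symm
  have hle1 : (1+r)*(1-r) ≤ 1 := by nlinarith
  have hpos : 0 < (1+r)*(1-r) := mul_pos h1 h2
  have : 1 ≤ ((1+r)*(1-r)) ^ t := one_le_rpow_of_pos_of_le_one_of_nonpos hpos hle1 ht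
  have h5 : 1 ≤ Real.sqrt (((1+r)*(1-r)) ^ t) := by
    have := Real.sqrt_le_sqrt this
    simpa using this
  calc (2:ℝ) = 2 * 1 := by ring
    _ ≤ 2 * Real.sqrt (((1+r)*(1-r)) ^ t) := by linarith
    _ = 2 * Real.sqrt ((1 + r) ^ t * (1 - r) ^ t) := by rw [hprod]
    _ ≤ _ := key

lemma core1 {q : ℝ} (hq0 : 0 ≤ q) (hq1 : q ≤ 1) {r : ℝ} (hr : r ∈ Icc (0:ℝ) 1) :
    2 * q * r ≤ (1 + r) ^ q - (1 - r) ^ q := by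
  set h : ℝ → ℝ := fun r => (1 + r) ^ q - (1 - r) ^ q - 2 * q * r with hh
  have hcont : ContinuousOn h (Icc 0 1) := by
    apply ContinuousOn.sub
    apply ContinuousOn.sub
    · exact (continuousOn_const.add continuousOn_id).rpow_const (fun x hx => Or.inr hq0)
    · exact (continuousOn_const.sub continuousOn_id).rpow_const (fun x hx => Or.inr hq0)
    · exact continuousOn_const.mul continuousOn_id
  have hderiv : ∀ x ∈ Ioo (0:ℝ) 1, HasDerivAt h
      (1 * q * (1 + x) ^ (q - 1) - (-1) * q * (1 - x) ^ (q - 1) - 2 * q) x := by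
    intro x hx
    have h1 : (0:ℝ) < 1 + x := by linarith [hx.1]
    have h2 : (0:ℝ) < 1 - x := by linarith [hx.2]
    have d1 : HasDerivAt (fun y : ℝ => (1 + y) ^ q) (1 * q * (1 + x) ^ (q - 1)) x :=
      ((hasDerivAt_id x).const_add 1).rpow_const (Or.inl h1.ne')
    have d2 : HasDerivAt (fun y : ℝ => (1 - y) ^ q) ((-1) * q * (1 - x) ^ (q - 1)) x := by
      have : HasDerivAt (fun y : ℝ => 1 - y) (-1) x := ((hasDerivAt_id x).const_sub 1).congr_deriv (by norm_num)
      exact this.rpow_const (Or.inl h2.ne')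
    have d3 : HasDerivAt (fun y : ℝ => 2 * q * y) (2 * q) x := by
      simpa using (hasDerivAt_id x).const_mul (2 * q)
    exact (d1.sub d2).sub d3
  have hmono : MonotoneOn h (Icc 0 1) := by
    apply monotoneOn_of_deriv_nonneg (convex_Icc 0 1) hcont
    · intro x hx
      rw [interior_Icc] at hx
      exact (hderiv x hx).differentiableAt.differentiableWithinAt
    · intro x hx
      rw [interior_Icc] at hx
      rw [(hderiv x hx).deriv]
      have := amgm_step (t := q - 1) (by linarith) hx.1 hx.2
      nlinarith [this, hq0]
  have h0 : h 0 = 0 := by simp [hh]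
  have := hmono (left_mem_Icc.mpr zero_le_one) hr hr.1
  rw [h0] at this
  simp only [hh] at this
  linarith
lemma core2 {p : ℝ} (hp1 : 1 ≤ p) (hp2 : p ≤ 2) {r : ℝ} (hr : r ∈ Icc (0:ℝ) 1) :
    2 + p * (p - 1) * r ^ 2 ≤ (1 + r) ^ p + (1 - r) ^ p := by
  set g : ℝ → ℝ := fun r => (1 + r) ^ p + (1 - r) ^ p - 2 - p * (p - 1) * r ^ 2 with hg
  have hp0 : (0:ℝ) ≤ p := by linarith
  have hcont : ContinuousOn g (Icc 0 1) := by
    apply ContinuousOn.sub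
    apply ContinuousOn.sub
    apply ContinuousOn.add
    · exact (continuousOn_const.add continuousOn_id).rpow_const (fun x hx => Or.inr hp0)
    · exact (continuousOn_const.sub continuousOn_id).rpow_const (fun x hx => Or.inr hp0)
    · exact continuousOn_const
    · exact continuousOn_const.mul (continuousOn_id.pow 2)
  have hderiv : ∀ x ∈ Ioo (0:ℝ) 1, HasDerivAt g
      (1 * p * (1 + x) ^ (p - 1) + (-1) * p * (1 - x) ^ (p - 1) - p * (p - 1) * (2 * x)) x := by
    intro x hx
    have h1 : (0:ℝ) < 1 + x := by linarith [hx.1]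
    have h2 : (0:ℝ) < 1 - x := by linarith [hx.2]
    have d1 : HasDerivAt (fun y : ℝ => (1 + y) ^ p) (1 * p * (1 + x) ^ (p - 1)) x :=
      ((hasDerivAt_id x).const_add 1).rpow_const (Or.inl h1.ne')
    have d2 : HasDerivAt (fun y : ℝ => (1 - y) ^ p) ((-1) * p * (1 - x) ^ (p - 1)) x := by
      have : HasDerivAt (fun y : ℝ => 1 - y) (-1) x :=
        ((hasDerivAt_id x).const_sub 1).congr_deriv (by norm_num)
      exact this.rpow_const (Or.inl h2.ne')
    have d3 : HasDerivAt (fun y : ℝ => p * (p - 1) * y ^ 2) (p * (p - 1) * (2 * x)) x := by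
      have : HasDerivAt (fun y : ℝ => y ^ 2) (2 * x) x := by
        simpa using (hasDerivAt_pow 2 x)
      exact this.const_mul (p * (p - 1))
    exact ((d1.add d2).sub_const 2).sub d3
  have hmono : MonotoneOn g (Icc 0 1) := by
    apply monotoneOn_of_deriv_nonneg (convex_Icc 0 1) hcont
    · intro x hx
      rw [interior_Icc] at hx
      exact (hderiv x hx).differentiableAt.differentiableWithinAt
    · intro x hx
      rw [interior_Icc] at hx
      rw [(hderiv x hx).deriv]
      have hc := core1 (q := p - 1) (by linarith) (by linarith)
        (Ioo_subset_Icc_self hx)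
      nlinarith [hc]
  have h0 : g 0 = 0 := by norm_num [hg]
  have := hmono (left_mem_Icc.mpr zero_le_one) hr hr.1
  rw [h0] at this
  simp only [hg] at this
  linarith

lemma core3 {p : ℝ} (hp1 : 1 ≤ p) (hp2 : p ≤ 2) {r : ℝ} (hr : r ∈ Icc (0:ℝ) 1) :
    (1 + (p - 1) * r ^ 2) ^ (p / 2) ≤ ((1 + r) ^ p + (1 - r) ^ p) / 2 := by
  have hb : (1 + (p - 1) * r ^ 2) ^ (p / 2) ≤ 1 + (p / 2) * ((p - 1) * r ^ 2) := by
    apply rpow_one_add_le_one_add_mul_self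
    · nlinarith [hr.1, hr.2]
    · linarith
    · linarith
  have := core2 hp1 hp2 hr
  calc (1 + (p - 1) * r ^ 2) ^ (p / 2) ≤ 1 + (p / 2) * ((p - 1) * r ^ 2) := hb
    _ = (2 + p * (p - 1) * r ^ 2) / 2 := by ring
    _ ≤ ((1 + r) ^ p + (1 - r) ^ p) / 2 := by linarith
lemma scalar_aux {p : ℝ} (hp1 : 1 ≤ p) (hp2 : p ≤ 2) {a b : ℝ}
    (hb0 : 0 ≤ b) (hba : b ≤ a) :
    (a ^ 2 + (p - 1) * b ^ 2) ^ (p / 2) ≤ (|a + b| ^ p + |a - b| ^ p) / 2 := by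
  have ha0 : 0 ≤ a := hb0.trans hba
  rcases eq_or_lt_of_le ha0 with h | ha
  · have hb : b = 0 := le_antisymm (h ▸ hba) hb0
    rw [← h, hb]
    norm_num
    rw [Real.zero_rpow (by positivity)]
    positivity
  · set r := b / a with hr
    have hrIcc : r ∈ Set.Icc (0:ℝ) 1 := ⟨div_nonneg hb0 ha.le, (div_le_one ha).mpr hba⟩
    have hab : a + b = a * (1 + r) := by rw [hr]; field_simp
    have hab' : a - b = a * (1 - r) := by rw [hr]; field_simp
    have hsq : a ^ 2 + (p - 1) * b ^ 2 = a ^ 2 * (1 + (p - 1) * r ^ 2) := by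
      rw [hr]; field_simp; try ring
    have h1r : (0:ℝ) ≤ 1 + r := by linarith [hrIcc.1]
    have h1r' : (0:ℝ) ≤ 1 - r := by linarith [hrIcc.2]
    have e1 : |a + b| ^ p = a ^ p * (1 + r) ^ p := by
      rw [hab, abs_of_nonneg (by positivity), Real.mul_rpow ha.le h1r]
    have e2 : |a - b| ^ p = a ^ p * (1 - r) ^ p := by
      rw [hab', abs_of_nonneg (by positivity), Real.mul_rpow ha.le h1r']
    have e3 : (a ^ 2 + (p - 1) * b ^ 2) ^ (p / 2) = a ^ p * (1 + (p - 1) * r ^ 2) ^ (p / 2) := by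
      rw [hsq, Real.mul_rpow (by positivity) (by nlinarith [hrIcc.1, hrIcc.2])]
      congr 1
      rw [← Real.rpow_natCast a 2, ← Real.rpow_mul ha.le]
      congr 1
      push_cast
      ring
    rw [e1, e2, e3]
    have hc := core3 hp1 hp2 hrIcc
    have hap : 0 ≤ a ^ p := Real.rpow_nonneg ha.le p
    calc a ^ p * (1 + (p - 1) * r ^ 2) ^ (p / 2)
        ≤ a ^ p * (((1 + r) ^ p + (1 - r) ^ p) / 2) := by
          exact mul_le_mul_of_nonneg_left hc hap
      _ = (a ^ p * (1 + r) ^ p + a ^ p * (1 - r) ^ p) / 2 := by ring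

lemma scalar_nonneg {p : ℝ} (hp1 : 1 ≤ p) (hp2 : p ≤ 2) {a b : ℝ}
    (ha0 : 0 ≤ a) (hb0 : 0 ≤ b) :
    (a ^ 2 + (p - 1) * b ^ 2) ^ (p / 2) ≤ (|a + b| ^ p + |a - b| ^ p) / 2 := by
  rcases le_total b a with h | h
  · exact scalar_aux hp1 hp2 hb0 h
  · have := scalar_aux hp1 hp2 ha0 h
    have habs : |b - a| = |a - b| := abs_sub_comm b a
    have hcomm : b + a = a + b := by ring
    rw [habs, hcomm] at this
    refine le_trans ?_ this
    apply Real.rpow_le_rpow (by nlinarith) ?_ (by linarith)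
    nlinarith [pow_le_pow_left₀ ha0 h 2]

lemma scalar_ineq {p : ℝ} (hp1 : 1 ≤ p) (hp2 : p ≤ 2) (a b : ℝ) :
    (a ^ 2 + (p - 1) * b ^ 2) ^ (p / 2) ≤ (|a + b| ^ p + |a - b| ^ p) / 2 := by
  rcases le_total 0 a with ha | ha
  · rcases le_total 0 b with hb | hb
    · exact scalar_nonneg hp1 hp2 ha hb
    · have := scalar_nonneg hp1 hp2 ha (neg_nonneg.mpr hb)
      have h1 : |a + -b| = |a - b| := by rw [sub_eq_add_neg]
      have h2 : |a - -b| = |a + b| := by rw [sub_neg_eq_add]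
      rw [h1, h2] at this
      calc (a ^ 2 + (p-1) * b^2) ^ (p/2) = (a^2 + (p-1)*(-b)^2) ^ (p/2) := by ring_nf
        _ ≤ (|a - b| ^ p + |a + b| ^ p) / 2 := this
        _ = (|a + b| ^ p + |a - b| ^ p) / 2 := by ring
  · rcases le_total 0 b with hb | hb
    · have := scalar_nonneg hp1 hp2 (neg_nonneg.mpr ha) hb
      have h1 : |-a + b| = |a - b| := by rw [← abs_neg]; ring_nf
      have h2 : |-a - b| = |a + b| := by rw [← abs_neg]; ring_nf
      rw [h1, h2] at this
      calc (a ^ 2 + (p-1) * b^2) ^ (p/2) = ((-a)^2 + (p-1)*b^2) ^ (p/2) := by ring_nf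
        _ ≤ (|a - b| ^ p + |a + b| ^ p) / 2 := this
        _ = (|a + b| ^ p + |a - b| ^ p) / 2 := by ring
    · have := scalar_nonneg hp1 hp2 (neg_nonneg.mpr ha) (neg_nonneg.mpr hb)
      have h1 : |-a + -b| = |a + b| := by rw [← abs_neg]; ring_nf
      have h2 : |-a - -b| = |a - b| := by rw [← abs_neg]; ring_nf
      rw [h1, h2] at this
      calc (a ^ 2 + (p-1) * b^2) ^ (p/2) = ((-a)^2 + (p-1)*(-b)^2) ^ (p/2) := by ring_nf
        _ ≤ (|a + b| ^ p + |a - b| ^ p) / 2 := this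
open MeasureTheory ENNReal in
/-- Reverse Minkowski inequality for `0 < s ≤ 1` on `ℝ≥0∞`-valued functions. -/
lemma rev_minkowski {Ω : Type*} [MeasurableSpace Ω] {μ : Measure Ω} {s : ℝ}
    (hs0 : 0 < s) (hs1 : s ≤ 1) {F G : Ω → ℝ≥0∞}
    (hF : AEMeasurable F μ) (hG : AEMeasurable G μ)
    (hFfin : ∀ᵐ a ∂μ, F a ≠ ∞) (hGfin : ∀ᵐ a ∂μ, G a ≠ ∞) :
    (∫⁻ a, F a ^ s ∂μ) ^ (1/s) + (∫⁻ a, G a ^ s ∂μ) ^ (1/s) ≤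
      (∫⁻ a, (F a + G a) ^ s ∂μ) ^ (1/s) := by
  rcases eq_or_lt_of_le hs1 with rfl | hs1
  · simp only [ENNReal.rpow_one, one_div, inv_one]
    rw [lintegral_add_left' hF]
  set H : Ω → ℝ≥0∞ := fun a => F a + G a with hH
  have hHm : AEMeasurable H μ := hF.add hG
  have hHfin : ∀ᵐ a ∂μ, H a ≠ ∞ := by
    filter_upwards [hFfin, hGfin] with a h1 h2
    simp [hH, ENNReal.add_ne_top, h1, h2]
  set IH := ∫⁻ a, H a ^ s ∂μ with hIH
  rcases eq_or_ne IH 0 with h0 | h0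
  · -- H = 0 a.e., so F = G = 0 a.e.
    have hH0 : ∀ᵐ a ∂μ, H a ^ s = 0 := (lintegral_eq_zero_iff' (hHm.pow_const s)).mp h0
    have hF0 : ∀ᵐ a ∂μ, F a ^ s = 0 := by
      filter_upwards [hH0] with a ha
      rw [ENNReal.rpow_eq_zero_iff] at ha ⊢
      rcases ha with ⟨ha, hs⟩ | ⟨ha, hs⟩
      · left; exact ⟨(add_eq_zero.mp ha).1, hs⟩
      · exact absurd hs (not_lt.mpr hs0.le)
    have hG0 : ∀ᵐ a ∂μ, G a ^ s = 0 := by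
      filter_upwards [hH0] with a ha
      rw [ENNReal.rpow_eq_zero_iff] at ha ⊢
      rcases ha with ⟨ha, hs⟩ | ⟨ha, hs⟩
      · left; exact ⟨(add_eq_zero.mp ha).2, hs⟩
      · exact absurd hs (not_lt.mpr hs0.le)
    rw [lintegral_congr_ae hF0, lintegral_congr_ae hG0, h0]
    simp only [lintegral_zero]
    rw [ENNReal.zero_rpow_of_pos (by positivity)]
    simp
  rcases eq_or_ne IH ∞ with htop | htop
  · rw [htop, ENNReal.top_rpow_of_pos (by positivity)]
    exact le_top
  -- main case
  have hconj : Real.HolderConjugate (1/s) (1/(1-s)) := by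
    rw [Real.holderConjugate_iff]
    constructor
    · rw [lt_div_iff₀ hs0]; linarith
    · simp only [one_div, inv_inv]; ring
  have hHs1 : AEMeasurable (fun a => H a ^ (s-1)) μ := hHm.pow_const _
  -- key pointwise identity under finiteness: X^s = (X * H^(s-1))^s * (H^s)^(1-s) when X ≤ H
  have key : ∀ (X : Ω → ℝ≥0∞), AEMeasurable X μ → (∀ᵐ a ∂μ, X a ≤ H a) →
      (∫⁻ a, X a ^ s ∂μ) ^ (1/s) ≤ (∫⁻ a, X a * H a ^ (s-1) ∂μ) * IH ^ ((1-s)/s) := by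
    intro X hXm hXH
    have hH1 : ∫⁻ a, X a ^ s ∂μ ≤
        (∫⁻ a, X a * H a ^ (s-1) ∂μ) ^ s * IH ^ (1-s) := by
      have hpt : ∀ᵐ a ∂μ, X a ^ s ≤
          ((fun a => (X a * H a ^ (s-1)) ^ s) * fun a => (H a ^ s) ^ (1-s)) a := by
        filter_upwards [hXH, hHfin] with a hle hfin
        simp only [Pi.mul_apply]
        rw [ENNReal.mul_rpow_of_nonneg _ _ hs0.le, ← ENNReal.rpow_mul, ← ENNReal.rpow_mul]
        rcases eq_or_ne (H a) 0 with h0' | h0'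
        · have : X a = 0 := le_antisymm (h0' ▸ hle) zero_le
          simp [this, ENNReal.zero_rpow_of_pos hs0]
        · rw [mul_assoc, ← ENNReal.rpow_add _ _ h0' hfin]
          have : (s-1)*s + s*(1-s) = 0 := by ring
          rw [this, ENNReal.rpow_zero, mul_one]
      calc ∫⁻ a, X a ^ s ∂μ ≤ ∫⁻ a, ((fun a => (X a * H a ^ (s-1)) ^ s) *
            fun a => (H a ^ s) ^ (1-s)) a ∂μ := lintegral_mono_ae hpt
        _ ≤ (∫⁻ a, ((X a * H a ^ (s-1)) ^ s) ^ (1/s) ∂μ) ^ (1/(1/s)) *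
            (∫⁻ a, ((H a ^ s) ^ (1-s)) ^ (1/(1-s)) ∂μ) ^ (1/(1/(1-s))) := by
            have := ENNReal.lintegral_mul_le_Lp_mul_Lq μ hconj
              ((hXm.mul hHs1).pow_const s) ((hHm.pow_const s).pow_const (1-s))
            simpa using this
        _ = (∫⁻ a, X a * H a ^ (s-1) ∂μ) ^ s * IH ^ (1-s) := by
            rw [one_div_one_div, one_div_one_div]
            congr 1
            · congr 1
              apply lintegral_congr fun a => ?_
              rw [← ENNReal.rpow_mul, mul_one_div, div_self hs0.ne', ENNReal.rpow_one]
            · congr 1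
              apply lintegral_congr fun a => ?_
              rw [← ENNReal.rpow_mul, mul_one_div, div_self (by linarith : (1:ℝ)-s ≠ 0),
                ENNReal.rpow_one]
    calc (∫⁻ a, X a ^ s ∂μ) ^ (1/s)
        ≤ ((∫⁻ a, X a * H a ^ (s-1) ∂μ) ^ s * IH ^ (1-s)) ^ (1/s) :=
          ENNReal.rpow_le_rpow hH1 (by positivity)
      _ = (∫⁻ a, X a * H a ^ (s-1) ∂μ) * IH ^ ((1-s)/s) := by
          rw [ENNReal.mul_rpow_of_nonneg _ _ (by positivity), ← ENNReal.rpow_mul,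
            ← ENNReal.rpow_mul, mul_one_div, div_self hs0.ne', ENNReal.rpow_one,
            mul_one_div]
  have hFle : ∀ᵐ a ∂μ, F a ≤ H a := Filter.Eventually.of_forall fun a => le_add_right le_rfl
  have hGle : ∀ᵐ a ∂μ, G a ≤ H a := Filter.Eventually.of_forall fun a => le_add_left le_rfl
  have hsum : (∫⁻ a, F a * H a ^ (s-1) ∂μ) + (∫⁻ a, G a * H a ^ (s-1) ∂μ) = IH := by
    rw [← lintegral_add_left' (f := fun a => F a * H a ^ (s-1)) (hF.mul hHs1)]
    apply lintegral_congr_ae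
    filter_upwards [hHfin] with a hfin
    rcases eq_or_ne (H a) 0 with h0' | h0'
    · have hF0 : F a = 0 := by
        have := add_eq_zero.mp h0'
        exact this.1
      have hG0 : G a = 0 := (add_eq_zero.mp h0').2
      simp [hF0, hG0, ENNReal.zero_rpow_of_pos hs0, h0']
    · rw [← add_mul]
      show H a * H a ^ (s-1) = H a ^ s
      nth_rewrite 1 [← ENNReal.rpow_one (H a)]
      rw [← ENNReal.rpow_add _ _ h0' hfin]
      norm_num
  calc (∫⁻ a, F a ^ s ∂μ) ^ (1/s) + (∫⁻ a, G a ^ s ∂μ) ^ (1/s)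
      ≤ (∫⁻ a, F a * H a ^ (s-1) ∂μ) * IH ^ ((1-s)/s) +
        (∫⁻ a, G a * H a ^ (s-1) ∂μ) * IH ^ ((1-s)/s) :=
        add_le_add (key F hF hFle) (key G hG hGle)
    _ = IH * IH ^ ((1-s)/s) := by rw [← add_mul, hsum]
    _ = IH ^ (1/s) := by
        nth_rewrite 1 [← ENNReal.rpow_one IH]
        rw [← ENNReal.rpow_add _ _ h0 htop]
        congr 1
        field_simp
        ring
lemma ofReal_abs_rpow (x : ℝ) {t : ℝ} (ht : 0 ≤ t) :
    ENNReal.ofReal (|x| ^ t) = (‖x‖₊ : ℝ≥0∞) ^ t := by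
  rw [← ENNReal.ofReal_rpow_of_nonneg (abs_nonneg x) ht, ← Real.norm_eq_abs,
    ofReal_norm, enorm_eq_nnnorm]

lemma sq_rpow_half (x : ℝ) (p : ℝ) : ((x ^ 2 : ℝ)) ^ (p/2) = |x| ^ p := by
  rw [← sq_abs, ← Real.rpow_natCast |x| 2, ← Real.rpow_mul (abs_nonneg x)]
  norm_num
  congr 1
  ring

lemma ofReal_sq_rpow (x : ℝ) {p : ℝ} (hp : 0 ≤ p) :
    (ENNReal.ofReal (x ^ 2)) ^ (p/2) = (‖x‖₊ : ℝ≥0∞) ^ p := by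
  rw [ENNReal.ofReal_rpow_of_nonneg (sq_nonneg x) (by positivity), sq_rpow_half,
    ofReal_abs_rpow x hp]

open MeasureTheory in
lemma bcl_enn {Ω : Type*} [MeasurableSpace Ω] {μ : Measure Ω} {p : ℝ}
    (hp1 : 1 ≤ p) (hp2 : p ≤ 2) {f g : Ω → ℝ}
    (hf : AEMeasurable f μ) (hg : AEMeasurable g μ) :
    (∫⁻ a, (‖f a‖₊ : ℝ≥0∞) ^ p ∂μ) ^ (2/p) +
      ENNReal.ofReal (p-1) * (∫⁻ a, (‖g a‖₊ : ℝ≥0∞) ^ p ∂μ) ^ (2/p) ≤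
    (((∫⁻ a, (‖f a + g a‖₊ : ℝ≥0∞) ^ p ∂μ) +
      (∫⁻ a, (‖f a - g a‖₊ : ℝ≥0∞) ^ p ∂μ)) / 2) ^ (2/p) := by
  have hp0 : (0:ℝ) < p := by linarith
  set F : Ω → ℝ≥0∞ := fun a => ENNReal.ofReal ((f a) ^ 2) with hF
  set G : Ω → ℝ≥0∞ := fun a => ENNReal.ofReal ((p - 1) * (g a) ^ 2) with hG
  have hFm : AEMeasurable F μ := ENNReal.measurable_ofReal.comp_aemeasurable (hf.pow_const 2)
  have hGm : AEMeasurable G μ :=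
    ENNReal.measurable_ofReal.comp_aemeasurable ((hg.pow_const 2).const_mul _)
  -- reverse Minkowski with s = p/2
  have hrm := rev_minkowski (μ := μ) (s := p/2) (by positivity) (by linarith) hFm hGm
    (Filter.Eventually.of_forall fun a => ENNReal.ofReal_ne_top)
    (Filter.Eventually.of_forall fun a => ENNReal.ofReal_ne_top)
  have h1s : 1 / (p/2) = 2/p := by field_simp
  rw [h1s] at hrm
  -- compute ∫ F^(p/2)
  have eF : (∫⁻ a, F a ^ (p/2) ∂μ) = ∫⁻ a, (‖f a‖₊ : ℝ≥0∞) ^ p ∂μ :=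
    lintegral_congr fun a => ofReal_sq_rpow (f a) hp0.le
  -- compute ∫ G^(p/2)
  have eG : (∫⁻ a, G a ^ (p/2) ∂μ) =
      ENNReal.ofReal (p-1) ^ (p/2) * ∫⁻ a, (‖g a‖₊ : ℝ≥0∞) ^ p ∂μ := by
    rw [← lintegral_const_mul' _ _ (ENNReal.rpow_ne_top_of_nonneg (by positivity)
      ENNReal.ofReal_ne_top)]
    apply lintegral_congr fun a => ?_
    rw [hG]
    simp only
    rw [ENNReal.ofReal_mul (by linarith), ENNReal.mul_rpow_of_nonneg _ _ (by positivity),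
      ofReal_sq_rpow (g a) hp0.le]
  have eGpow : (ENNReal.ofReal (p-1) ^ (p/2) * ∫⁻ a, (‖g a‖₊ : ℝ≥0∞) ^ p ∂μ) ^ (2/p) =
      ENNReal.ofReal (p-1) * (∫⁻ a, (‖g a‖₊ : ℝ≥0∞) ^ p ∂μ) ^ (2/p) := by
    rw [ENNReal.mul_rpow_of_nonneg _ _ (by positivity), ← ENNReal.rpow_mul]
    congr 2
    field_simp
    simp
  -- pointwise estimate for ∫ (F+G)^(p/2)
  have ept : (∫⁻ a, (F a + G a) ^ (p/2) ∂μ) ≤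
      ((∫⁻ a, (‖f a + g a‖₊ : ℝ≥0∞) ^ p ∂μ) +
        (∫⁻ a, (‖f a - g a‖₊ : ℝ≥0∞) ^ p ∂μ)) / 2 := by
    have hmono : (∫⁻ a, (F a + G a) ^ (p/2) ∂μ) ≤
        ∫⁻ a, ((‖f a + g a‖₊ : ℝ≥0∞) ^ p + (‖f a - g a‖₊ : ℝ≥0∞) ^ p) / 2 ∂μ := by
      apply lintegral_mono fun a => ?_
      have hFG : F a + G a = ENNReal.ofReal ((f a) ^ 2 + (p-1) * (g a) ^ 2) := by
        rw [hF, hG]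
        simp only
        rw [ENNReal.ofReal_add (sq_nonneg _) (mul_nonneg (by linarith) (sq_nonneg _))]
      rw [hFG, ENNReal.ofReal_rpow_of_nonneg (add_nonneg (sq_nonneg _) (mul_nonneg (by linarith) (sq_nonneg _))) (by positivity)]
      have hs := scalar_ineq hp1 hp2 (f a) (g a)
      calc ENNReal.ofReal (((f a) ^ 2 + (p-1) * (g a) ^ 2) ^ (p/2))
          ≤ ENNReal.ofReal ((|f a + g a| ^ p + |f a - g a| ^ p) / 2) :=
            ENNReal.ofReal_le_ofReal hs
        _ = ((‖f a + g a‖₊ : ℝ≥0∞) ^ p + (‖f a - g a‖₊ : ℝ≥0∞) ^ p) / 2 := by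
            rw [ENNReal.ofReal_div_of_pos (by norm_num),
              ENNReal.ofReal_add (Real.rpow_nonneg (abs_nonneg _) _)
                (Real.rpow_nonneg (abs_nonneg _) _),
              ofReal_abs_rpow _ hp0.le, ofReal_abs_rpow _ hp0.le]
            norm_num
    refine hmono.trans (le_of_eq ?_)
    simp_rw [div_eq_mul_inv]
    rw [lintegral_mul_const' _ _ (by norm_num), lintegral_add_left' (f := fun a => (‖f a + g a‖₊ : ℝ≥0∞) ^ p)
      (((hf.add hg).nnnorm.coe_nnreal_ennreal).pow_const p)]
  calc (∫⁻ a, (‖f a‖₊ : ℝ≥0∞) ^ p ∂μ) ^ (2/p) +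
      ENNReal.ofReal (p-1) * (∫⁻ a, (‖g a‖₊ : ℝ≥0∞) ^ p ∂μ) ^ (2/p)
      = (∫⁻ a, F a ^ (p/2) ∂μ) ^ (2/p) + (∫⁻ a, G a ^ (p/2) ∂μ) ^ (2/p) := by
        rw [eF, eG, eGpow]
    _ ≤ (∫⁻ a, (F a + G a) ^ (p/2) ∂μ) ^ (2/p) := hrm
    _ ≤ _ := ENNReal.rpow_le_rpow ept (by positivity)
open MeasureTheory in
lemma bcl_norm {p : ℝ} (hp1 : 1 ≤ p) (hp2 : p ≤ 2) {Ω : Type*} [MeasurableSpace Ω]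
    {μ : Measure Ω} [Fact (1 ≤ ENNReal.ofReal p)] (f g : Lp ℝ (ENNReal.ofReal p) μ) :
    ‖f‖ ^ 2 + (p - 1) * ‖g‖ ^ 2 ≤ (‖f + g‖ ^ 2 + ‖f - g‖ ^ 2) / 2 := by
  have hp0 : (0:ℝ) < p := by linarith
  have hq0 : ENNReal.ofReal p ≠ 0 := by simp [ENNReal.ofReal_eq_zero]; linarith
  have hqt : ENNReal.ofReal p ≠ ∞ := ENNReal.ofReal_ne_top
  have hqp : (ENNReal.ofReal p).toReal = p := ENNReal.toReal_ofReal hp0.le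
  have hrpow2 : ∀ x : ℝ, x ^ (2:ℝ) = x ^ 2 := fun x => by
    rw [show (2:ℝ) = ((2:ℕ):ℝ) by norm_num, Real.rpow_natCast]
  -- notation for seminorms
  set Nf := eLpNorm (⇑f) (ENNReal.ofReal p) μ with hNf
  set Ng := eLpNorm (⇑g) (ENNReal.ofReal p) μ with hNg
  set Nfg := eLpNorm (⇑(f + g)) (ENNReal.ofReal p) μ with hNfg
  set Nmg := eLpNorm (⇑(f - g)) (ENNReal.ofReal p) μ with hNmg
  have hSf : (∫⁻ a, (‖f a‖₊ : ℝ≥0∞) ^ p ∂μ) = Nf ^ p := by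
    rw [hNf, eLpNorm_eq_lintegral_rpow_enorm_toReal hq0 hqt, hqp, ← ENNReal.rpow_mul,
      one_div, inv_mul_cancel₀ hp0.ne', ENNReal.rpow_one]
    rfl
  have hSg : (∫⁻ a, (‖g a‖₊ : ℝ≥0∞) ^ p ∂μ) = Ng ^ p := by
    rw [hNg, eLpNorm_eq_lintegral_rpow_enorm_toReal hq0 hqt, hqp, ← ENNReal.rpow_mul,
      one_div, inv_mul_cancel₀ hp0.ne', ENNReal.rpow_one]
    rfl
  have hSfg : (∫⁻ a, (‖f a + g a‖₊ : ℝ≥0∞) ^ p ∂μ) = Nfg ^ p := by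
    rw [hNfg, eLpNorm_congr_ae (Lp.coeFn_add f g), eLpNorm_eq_lintegral_rpow_enorm_toReal hq0 hqt,
      hqp, ← ENNReal.rpow_mul, one_div, inv_mul_cancel₀ hp0.ne', ENNReal.rpow_one]
    rfl
  have hSmg : (∫⁻ a, (‖f a - g a‖₊ : ℝ≥0∞) ^ p ∂μ) = Nmg ^ p := by
    rw [hNmg, eLpNorm_congr_ae (Lp.coeFn_sub f g), eLpNorm_eq_lintegral_rpow_enorm_toReal hq0 hqt,
      hqp, ← ENNReal.rpow_mul, one_div, inv_mul_cancel₀ hp0.ne', ENNReal.rpow_one]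
    rfl
  have key := bcl_enn hp1 hp2 (Lp.aestronglyMeasurable f).aemeasurable
    (Lp.aestronglyMeasurable g).aemeasurable (μ := μ)
  rw [hSf, hSg, hSfg, hSmg] at key
  have hpow : ∀ N : ℝ≥0∞, (N ^ p) ^ (2/p) = N ^ (2:ℝ) := fun N => by
    rw [← ENNReal.rpow_mul]
    congr 1
    field_simp
  rw [hpow, hpow] at key
  -- power mean step on the RHS
  have hpm : ((Nfg ^ p + Nmg ^ p) / 2) ^ (2/p) ≤ (Nfg ^ (2:ℝ) + Nmg ^ (2:ℝ)) / 2 := by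
    have h2p : 1 ≤ 2/p := by rw [le_div_iff₀ hp0]; linarith
    have := ENNReal.rpow_arith_mean_le_arith_mean2_rpow 2⁻¹ 2⁻¹ (Nfg ^ p) (Nmg ^ p)
      ENNReal.inv_two_add_inv_two h2p
    rw [hpow, hpow] at this
    have hsplit : ∀ X Y : ℝ≥0∞, (X + Y) / 2 = 2⁻¹ * X + 2⁻¹ * Y := fun X Y => by
      rw [div_eq_mul_inv, add_mul, mul_comm X, mul_comm Y]
    calc ((Nfg ^ p + Nmg ^ p) / 2) ^ (2/p)
        = (2⁻¹ * Nfg ^ p + 2⁻¹ * Nmg ^ p) ^ (2/p) := by rw [hsplit]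
      _ ≤ 2⁻¹ * Nfg ^ (2:ℝ) + 2⁻¹ * Nmg ^ (2:ℝ) := this
      _ = (Nfg ^ (2:ℝ) + Nmg ^ (2:ℝ)) / 2 := (hsplit _ _).symm
  have keyr : Nf ^ (2:ℝ) + ENNReal.ofReal (p-1) * Ng ^ (2:ℝ) ≤
      (Nfg ^ (2:ℝ) + Nmg ^ (2:ℝ)) / 2 := key.trans hpm
  -- pass to real numbers
  have hNfgt : Nfg ≠ ∞ := Lp.eLpNorm_ne_top _
  have hNmgt : Nmg ≠ ∞ := Lp.eLpNorm_ne_top _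
  have hNft : Nf ≠ ∞ := Lp.eLpNorm_ne_top _
  have hNgt : Ng ≠ ∞ := Lp.eLpNorm_ne_top _
  have hrhs_fin : (Nfg ^ (2:ℝ) + Nmg ^ (2:ℝ)) / 2 ≠ ∞ := by
    rw [div_eq_mul_inv]
    exact ENNReal.mul_ne_top (ENNReal.add_ne_top.mpr
      ⟨ENNReal.rpow_ne_top_of_nonneg (by norm_num) hNfgt,
       ENNReal.rpow_ne_top_of_nonneg (by norm_num) hNmgt⟩) (by norm_num)
  have := ENNReal.toReal_mono hrhs_fin keyr
  rw [ENNReal.toReal_add (ENNReal.rpow_ne_top_of_nonneg (by norm_num) hNft)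
      (ENNReal.mul_ne_top ENNReal.ofReal_ne_top
        (ENNReal.rpow_ne_top_of_nonneg (by norm_num) hNgt)),
    ENNReal.toReal_mul, ENNReal.toReal_ofReal (by linarith : (0:ℝ) ≤ p - 1),
    ENNReal.toReal_div, ENNReal.toReal_add
      (ENNReal.rpow_ne_top_of_nonneg (by norm_num) hNfgt)
      (ENNReal.rpow_ne_top_of_nonneg (by norm_num) hNmgt),
    ← ENNReal.toReal_rpow, ← ENNReal.toReal_rpow, ← ENNReal.toReal_rpow,
    ← ENNReal.toReal_rpow] at this
  simp only [ENNReal.toReal_ofNat] at this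
  rw [hrpow2, hrpow2, hrpow2, hrpow2] at this
  simpa [Lp.norm_def, hNf, hNg, hNfg, hNmg] using this
/-- The 4-point inequality in `L_p` for `1 ≤ p ≤ 2`:
`‖u − w‖² + (p−1)‖x − v‖² ≤ ‖u − v‖² + ‖v − w‖² + ‖x − w‖² + ‖u − x‖²`. -/
theorem four_point_ineq_le_two (p : ℝ) (hp1 : 1 ≤ p) (hp2 : p ≤ 2)
    (Ω : Type) (mΩ : MeasurableSpace Ω) (μ : Measure Ω) :
    haveI : Fact (1 ≤ ENNReal.ofReal p) := ⟨ENNReal.one_le_ofReal.mpr hp1⟩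
    ∀ u v w x : Lp ℝ (ENNReal.ofReal p) μ,
      ‖u - w‖ ^ 2 + (p - 1) * ‖x - v‖ ^ 2 ≤
        ‖u - v‖ ^ 2 + ‖v - w‖ ^ 2 + ‖x - w‖ ^ 2 + ‖u - x‖ ^ 2 := by
  haveI : Fact (1 ≤ ENNReal.ofReal p) := ⟨ENNReal.one_le_ofReal.mpr hp1⟩
  intro u v w x
  have bcl2 : ∀ a b : Lp ℝ (ENNReal.ofReal p) μ,
      ‖a + b‖ ^ 2 + (p - 1) * ‖a - b‖ ^ 2 ≤ 2 * (‖a‖ ^ 2 + ‖b‖ ^ 2) := by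
    intro a b
    have h := bcl_norm hp1 hp2 (a + b) (a - b)
    have e1 : (a + b) + (a - b) = a + a := by abel
    have e2 : (a + b) - (a - b) = b + b := by abel
    rw [e1, e2] at h
    have na : ‖a + a‖ = 2 * ‖a‖ := by
      rw [← two_smul ℝ a, norm_smul]; simp
    have nb : ‖b + b‖ = 2 * ‖b‖ := by
      rw [← two_smul ℝ b, norm_smul]; simp
    rw [na, nb] at h
    nlinarith [h]
  have h1 := bcl2 (u - v) (v - w)
  have h2 := bcl2 (u - x) (x - w)
  have e1 : (u - v) + (v - w) = u - w := by abel
  have e2 : (u - x) + (x - w) = u - w := by abel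
  rw [e1] at h1
  rw [e2] at h2
  set A := ‖(u - v) - (v - w)‖ with hA
  set B := ‖(u - x) - (x - w)‖ with hB
  set t := ‖x - v‖ with ht
  have hAB : 2 * t ≤ A + B := by
    have e3 : (x - v) + (x - v) = ((u - v) - (v - w)) - ((u - x) - (x - w)) := by abel
    have : ‖(x - v) + (x - v)‖ ≤ A + B := by
      rw [e3, hA, hB]; exact norm_sub_le _ _
    have e4 : ‖(x - v) + (x - v)‖ = 2 * t := by
      rw [← two_smul ℝ (x - v), norm_smul, ht]; simp
    linarith [e4 ▸ this]
  have h3 : (2 * t) ^ 2 ≤ (A + B) ^ 2 :=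
    pow_le_pow_left₀ (by positivity) hAB 2
  have h4 : (p - 1) * (2 * t) ^ 2 ≤ (p - 1) * (A + B) ^ 2 :=
    mul_le_mul_of_nonneg_left h3 (by linarith)
  nlinarith [h1, h2, h4, mul_nonneg (by linarith : (0:ℝ) ≤ p - 1) (sq_nonneg (A - B))]
end

section
/- Let p ≥ 2 and let u, v, w, x be elements of a real L_p space (for instance L_p(μ) for a measure μ, or the sequence space ℓ_p). Then ‖u − w‖_p^p + ‖x − v‖_p^p ≤ 2^{p−2} (‖u − v‖_p^p + ‖v − w‖_p^p + ‖x − w‖_p^p + ‖u − x‖_p^p). -/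
open MeasureTheory

private lemma L1 {x y q : ℝ} (hx : 0 ≤ x) (hy : 0 ≤ y) (hq : 1 ≤ q) :
    x ^ q + y ^ q ≤ (x + y) ^ q := by
  have h := NNReal.coe_le_coe.mpr (NNReal.add_rpow_le_rpow_add x.toNNReal y.toNNReal hq)
  simpa [NNReal.coe_rpow, Real.coe_toNNReal _ hx, Real.coe_toNNReal _ hy,
    ← Real.toNNReal_add hx hy, Real.coe_toNNReal _ (add_nonneg hx hy)] using h

private lemma L2 {x y q : ℝ} (hx : 0 ≤ x) (hy : 0 ≤ y) (hq : 1 ≤ q) :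
    (x + y) ^ q ≤ 2 ^ (q - 1) * (x ^ q + y ^ q) := by
  have h := NNReal.coe_le_coe.mpr (NNReal.rpow_add_le_mul_rpow_add_rpow x.toNNReal y.toNNReal hq)
  simpa [NNReal.coe_rpow, Real.coe_toNNReal _ hx, Real.coe_toNNReal _ hy,
    ← Real.toNNReal_add hx hy, Real.coe_toNNReal _ (add_nonneg hx hy)] using h

-- pointwise two-point inequality
private lemma scalar_key {p : ℝ} (hp : 2 ≤ p) (a b : ℝ) :
    2 * (|a| ^ p + |b| ^ p) ≤ |a + b| ^ p + |a - b| ^ p := by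
  set r := p / 2 with hr_def
  have hr : 1 ≤ r := by rw [hr_def]; linarith
  have habs : ∀ c : ℝ, |c| ^ p = (c ^ 2) ^ r := by
    intro c
    rw [← sq_abs, ← Real.rpow_natCast |c| 2, ← Real.rpow_mul (abs_nonneg c)]
    norm_num [hr_def]
    ring_nf
  have hA : (a ^ 2) ^ r + (b ^ 2) ^ r ≤ (a ^ 2 + b ^ 2) ^ r :=
    L1 (sq_nonneg a) (sq_nonneg b) hr
  have hsum : (a + b) ^ 2 + (a - b) ^ 2 = 2 * (a ^ 2 + b ^ 2) := by ring
  have hB : ((a + b) ^ 2 + (a - b) ^ 2) ^ r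
      ≤ 2 ^ (r - 1) * (((a + b) ^ 2) ^ r + ((a - b) ^ 2) ^ r) :=
    L2 (sq_nonneg _) (sq_nonneg _) hr
  have h2r : (2 * (a ^ 2 + b ^ 2)) ^ r = 2 ^ r * (a ^ 2 + b ^ 2) ^ r :=
    Real.mul_rpow (by norm_num) (by positivity)
  rw [habs, habs, habs, habs]
  have h2rpos : (0:ℝ) < 2 ^ r := Real.rpow_pos_of_pos two_pos r
  -- from hB and hsum, h2r:
  rw [hsum, h2r] at hB
  have key : 2 ^ r * (a ^ 2 + b ^ 2) ^ r
      ≤ 2 ^ (r - 1) * (((a + b) ^ 2) ^ r + ((a - b) ^ 2) ^ r) := hB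
  have h2r1 : (2:ℝ) ^ r = 2 * 2 ^ (r - 1) := by
    rw [← Real.rpow_one_add' (by norm_num) (by intro h; nlinarith [h])]
    ring_nf
  have hq : (0:ℝ) < 2 ^ (r - 1) := Real.rpow_pos_of_pos two_pos (r - 1)
  have h3 : 2 ^ (r - 1) * (2 * (a ^ 2 + b ^ 2) ^ r)
      ≤ 2 ^ (r - 1) * (((a + b) ^ 2) ^ r + ((a - b) ^ 2) ^ r) := by
    rw [h2r1] at key; linarith [key]
  have h4 := (mul_le_mul_iff_right₀ hq).mp h3
  linarith [hA, h4]

private lemma norm_rpow_eq {p : ℝ} (hp : 2 ≤ p) {Ω : Type} [MeasurableSpace Ω]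
    {μ : Measure Ω} [Fact (1 ≤ ENNReal.ofReal p)] (f : Lp ℝ (ENNReal.ofReal p) μ) :
    ‖f‖ ^ p = ∫ a, ‖f a‖ ^ p ∂μ := by
  have hp0 : (0:ℝ) < p := by linarith
  have hne : ENNReal.ofReal p ≠ 0 := by simp [ENNReal.ofReal_eq_zero]; linarith
  have hnetop : ENNReal.ofReal p ≠ ⊤ := ENNReal.ofReal_ne_top
  have hmem := Lp.memLp f
  rw [Lp.norm_def, hmem.eLpNorm_eq_integral_rpow_norm hne hnetop]
  rw [ENNReal.toReal_ofReal hp0.le]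
  have hint : 0 ≤ ∫ a, ‖f a‖ ^ p ∂μ :=
    integral_nonneg fun a => Real.rpow_nonneg (norm_nonneg _) _
  rw [ENNReal.toReal_ofReal (Real.rpow_nonneg hint _), Real.rpow_inv_rpow hint hp0.ne']

private lemma clarkson {p : ℝ} (hp : 2 ≤ p) {Ω : Type} [MeasurableSpace Ω]
    {μ : Measure Ω} [Fact (1 ≤ ENNReal.ofReal p)] (f g : Lp ℝ (ENNReal.ofReal p) μ) :
    2 * (‖f‖ ^ p + ‖g‖ ^ p) ≤ ‖f + g‖ ^ p + ‖f - g‖ ^ p := by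
  have hp0 : (0:ℝ) < p := by linarith
  have hne : ENNReal.ofReal p ≠ 0 := by simp [ENNReal.ofReal_eq_zero]; linarith
  have hnetop : ENNReal.ofReal p ≠ ⊤ := ENNReal.ofReal_ne_top
  have hi : ∀ h : Lp ℝ (ENNReal.ofReal p) μ, Integrable (fun a => ‖h a‖ ^ p) μ := by
    intro h
    have := (Lp.memLp h).integrable_norm_rpow hne hnetop
    rwa [ENNReal.toReal_ofReal hp0.le] at this
  rw [norm_rpow_eq hp f, norm_rpow_eq hp g, norm_rpow_eq hp (f + g), norm_rpow_eq hp (f - g)]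
  rw [← integral_add (hi f) (hi g), ← integral_add (hi (f + g)) (hi (f - g)),
    ← MeasureTheory.integral_const_mul]
  refine integral_mono_ae (((hi f).add (hi g)).const_mul 2) ((hi (f + g)).add (hi (f - g))) ?_
  filter_upwards [Lp.coeFn_add f g, Lp.coeFn_sub f g] with a h1 h2
  rw [h1, h2]
  simpa [Real.norm_eq_abs] using scalar_key hp (f a) (g a)


/-- The 4-point inequality in `L_p` for `p ≥ 2`:
`‖u − w‖^p + ‖x − v‖^p ≤ 2^{p−2}(‖u − v‖^p + ‖v − w‖^p + ‖x − w‖^p + ‖u − x‖^p)`. -/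
theorem four_point_ineq_ge_two (p : ℝ) (hp : 2 ≤ p)
    (Ω : Type) (mΩ : MeasurableSpace Ω) (μ : Measure Ω) :
    haveI : Fact (1 ≤ ENNReal.ofReal p) := ⟨ENNReal.one_le_ofReal.mpr (by linarith)⟩
    ∀ u v w x : Lp ℝ (ENNReal.ofReal p) μ,
      ‖u - w‖ ^ p + ‖x - v‖ ^ p ≤
        (2 : ℝ) ^ (p - 2) * (‖u - v‖ ^ p + ‖v - w‖ ^ p + ‖x - w‖ ^ p + ‖u - x‖ ^ p) := by
  haveI : Fact (1 ≤ ENNReal.ofReal p) := ⟨ENNReal.one_le_ofReal.mpr (by linarith)⟩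
  intro u v w x
  have hp1 : (1:ℝ) ≤ p := by linarith
  have tri : ∀ f g : Lp ℝ (ENNReal.ofReal p) μ,
      ‖f + g‖ ^ p ≤ 2 ^ (p - 1) * (‖f‖ ^ p + ‖g‖ ^ p) := by
    intro f g
    calc ‖f + g‖ ^ p ≤ (‖f‖ + ‖g‖) ^ p :=
          Real.rpow_le_rpow (norm_nonneg _) (norm_add_le f g) (by linarith)
      _ ≤ 2 ^ (p - 1) * (‖f‖ ^ p + ‖g‖ ^ p) := L2 (norm_nonneg _) (norm_nonneg _) hp1
  have h1 := clarkson hp (u - w) (x - v)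
  have e1 : (u - w) + (x - v) = (u - v) + (x - w) := by abel
  have e2 : (u - w) - (x - v) = (v - w) + (u - x) := by abel
  rw [e1, e2] at h1
  have t1 := tri (u - v) (x - w)
  have t2 := tri (v - w) (u - x)
  have h2p : (2:ℝ) ^ (p - 1) = 2 * 2 ^ (p - 2) := by
    have hp' : p - 1 = 1 + (p - 2) := by ring
    rw [hp', Real.rpow_add two_pos, Real.rpow_one]
  rw [h2p] at t1 t2
  linarith [h1, t1, t2]
end

section
/- Let G = (V,E) be a finite connected vertex-transitive graph with diameter D ≥ 1, let f : V(G̃) → H be any map into a real Hilbert space H, and let f̄ be its symmetrization. Then: (1) ‖f̄(s) − f̄(t)‖ = ‖f(s) − f(t)‖; (2) for all u, v ∈ V, ‖f̄(s) − f̄(v^{(1)})‖ = ‖f̄(s) − f̄(u^{(1)})‖ and ‖f̄(t) − f̄(v^{(D+1)})‖ = ‖f̄(t) − f̄(u^{(D+1)})‖; (3) for all u, v ∈ V and 1 ≤ i ≤ D, ‖f̄(v^{(i)}) − f̄(v^{(i+1)})‖ = ‖f̄(u^{(i)}) − f̄(u^{(i+1)})‖; and (4) for all u, v ∈ V and 1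 ≤ i ≤ D+1, ⟨f̄(s) − f̄(t), f̄(u^{(i)}) − f̄(v^{(i)})⟩ = 0. -/
open scoped ENNReal

/-- Cost of a chain (list of vertices): sum of the length function over consecutive pairs. -/
noncomputable def chainCost {α : Type} (len : α → α → ℝ≥0∞) : List α → ℝ≥0∞
  | a :: b :: l => len a b + chainCost len (b :: l)
  | _ => 0
  termination_by l => l.length

/-- A finite weighted multigraph with two distinguished vertices `s` and `t`.
Edge lengths take values in `ℝ≥0∞`. -/
structure STGraph where
  V : Type
  E : Type
  finV : Fintype V
  finE : Fintype E
  ends : E → V × V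
  elen : E → ℝ≥0∞
  s : V
  t : V

attribute [instance] STGraph.finV STGraph.finE

namespace STGraph

/-- The length between two vertices: the infimum of lengths of edges joining them
(`⊤` if there is no such edge). -/
noncomputable def lenFn (G : STGraph) (u v : G.V) : ℝ≥0∞ :=
  ⨅ e : {e : G.E // G.ends e = (u, v) ∨ G.ends e = (v, u)}, G.elen e.1

/-- The shortest-path (extended) distance between two vertices. -/
noncomputable def edist (G : STGraph) (u v : G.V) : ℝ≥0∞ :=
  ⨅ l : {l : List G.V // l.head? = some u ∧ l.getLast? = some v}, chainCost G.lenFn l.1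

/-- `len G` is the distance between the two distinguished vertices. -/
noncomputable def len (G : STGraph) : ℝ≥0∞ := G.edist G.s G.t

/-- An `s`-`t` graph is *proper* if all edge lengths are positive and finite, there are no
self-loops, the graph is connected, and `s ≠ t`. -/
def Proper (G : STGraph) : Prop :=
  (∀ e, 0 < G.elen e ∧ G.elen e < ⊤) ∧
  (∀ e, (G.ends e).1 ≠ (G.ends e).2) ∧
  (∀ u v, G.edist u v ≠ ⊤) ∧ G.s ≠ G.t

/-- The inner (non-terminal) vertices of an `s`-`t` graph. -/
abbrev Inner (G : STGraph) : Type := {v : G.V // v ≠ G.s ∧ v ≠ G.t}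

noncomputable instance (G : STGraph) : Fintype G.Inner := Fintype.ofFinite _

/-- Where a vertex `w` of `G` lands in `H ⊘ G` when the copy of `G` is glued along edge `e` of
`H`: `s(G)` and `t(G)` are identified with the endpoints of `e`. -/
noncomputable def endMap (H G : STGraph) (e : H.E) (w : G.V) : H.V ⊕ (H.E × G.Inner) := by
  classical
  exact if h : w = G.s then Sum.inl (H.ends e).1
    else if h' : w = G.t then Sum.inl (H.ends e).2
    else Sum.inr (e, ⟨w, h, h'⟩)

/-- The composition `H ⊘ G`: every edge of `H` is replaced by a copy of `G`, with lengths in the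
copy along `e` scaled by `len_H(e)/len(G)`. -/
noncomputable def oslash (H G : STGraph) : STGraph where
  V := H.V ⊕ (H.E × G.Inner)
  E := H.E × G.E
  finV := inferInstance
  finE := inferInstance
  ends := fun p => (endMap H G p.1 (G.ends p.2).1, endMap H G p.1 (G.ends p.2).2)
  elen := fun p => H.elen p.1 * G.elen p.2 / G.len
  s := Sum.inl H.s
  t := Sum.inl H.t

/-- A single edge of unit length. -/
noncomputable def unitEdge : STGraph where
  V := Bool
  E := Unit
  finV := inferInstance
  finE := inferInstance
  ends := fun _ => (false, true)
  elen := fun _ => 1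
  s := false
  t := true

/-- Recursive composition: `G^{⊘0}` is a single unit-length edge and
`G^{⊘k} = G^{⊘(k-1)} ⊘ G`. -/
noncomputable def iterOslash (G : STGraph) : ℕ → STGraph
  | 0 => unitEdge
  | k + 1 => oslash (iterOslash G k) G

end STGraph
section Tilde

open STGraph

/-- `D` is the diameter of the connected unweighted graph `G`. -/
def IsDiameter {V : Type} (G : SimpleGraph V) (D : ℕ) : Prop :=
  (∀ u v, G.dist u v ≤ D) ∧ ∃ u v, G.dist u v = D

/-- The vertex set of `G̃`: four special vertices `s = Sum.inl 0`, `s' = Sum.inl 1`,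
`t' = Sum.inl 2`, `t = Sum.inl 3`, together with the layered vertices `v^{(i)}`. -/
abbrev TVert (V : Type) (D : ℕ) : Type := Fin 4 ⊕ (V × Fin (D + 1))

/-- The edge set of `G̃`: the two edges `(s,s'), (t',t)` of length `3D`; the edges
`(s', v^{(1)})` and `(v^{(D+1)}, t')` of length `D`; the diagonal edges
`(u^{(i)}, v^{(i+1)})`; the vertical edges `(u^{(j)}, v^{(j)})` (one per unordered edge of
`G`, oriented increasingly); and the edges `(v^{(i)}, v^{(i+1)})`. -/
abbrev TEdge {V : Type} [LinearOrder V] (G : SimpleGraph V) (D : ℕ) : Type :=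
  Fin 2 ⊕ ((V ⊕ V) ⊕ (({p : V × V // G.Adj p.1 p.2} × Fin D) ⊕
    (({p : V × V // G.Adj p.1 p.2 ∧ p.1 < p.2} × Fin (D + 1)) ⊕ (V × Fin D))))

/-- The metric `s`-`t` graph `G̃` built from a finite connected unweighted graph `G`
with diameter `D` (the graph `𝐺⃗` of layers, plus tails `(s,s')`, `(t',t)` of length `3D`). -/
noncomputable def tildeG {V : Type} [Fintype V] [LinearOrder V] (G : SimpleGraph V)
    [DecidableRel G.Adj] (D : ℕ) : STGraph where
  V := TVert V D
  E := TEdge G D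
  finV := inferInstance
  finE := inferInstance
  ends := fun e => match e with
    | Sum.inl i => if i = 0 then (Sum.inl 0, Sum.inl 1) else (Sum.inl 2, Sum.inl 3)
    | Sum.inr (Sum.inl (Sum.inl v)) => (Sum.inl 1, Sum.inr (v, 0))
    | Sum.inr (Sum.inl (Sum.inr v)) => (Sum.inr (v, Fin.last D), Sum.inl 2)
    | Sum.inr (Sum.inr (Sum.inl (p, i))) =>
        (Sum.inr (p.1.1, i.castSucc), Sum.inr (p.1.2, i.succ))
    | Sum.inr (Sum.inr (Sum.inr (Sum.inl (q, j)))) => (Sum.inr (q.1.1, j), Sum.inr (q.1.2, j))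
    | Sum.inr (Sum.inr (Sum.inr (Sum.inr (v, i)))) =>
        (Sum.inr (v, i.castSucc), Sum.inr (v, i.succ))
  elen := fun e => match e with
    | Sum.inl _ => 3 * (D : ℝ≥0∞)
    | Sum.inr (Sum.inl _) => (D : ℝ≥0∞)
    | Sum.inr (Sum.inr _) => 1
  s := Sum.inl 0
  t := Sum.inl 3

/-- A horizontal edge of `G̃` is any edge which is not vertical. -/
def IsHorizontal {V : Type} [LinearOrder V] {G : SimpleGraph V} {D : ℕ} :
    TEdge G D → Prop
  | Sum.inr (Sum.inr (Sum.inr (Sum.inl _))) => False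
  | _ => True

end Tilde
section Symmetry

/-- The automorphism group of a simple graph, as a subtype of permutations. -/
abbrev AutG {V : Type} (G : SimpleGraph V) : Type :=
  {π : Equiv.Perm V // ∀ a b, G.Adj (π a) (π b) ↔ G.Adj a b}

noncomputable instance {V : Type} [Finite V] (G : SimpleGraph V) : Fintype (AutG G) :=
  Fintype.ofFinite _

/-- `G` is vertex-transitive. -/
def VertexTransitive {V : Type} (G : SimpleGraph V) : Prop :=
  ∀ u v : V, ∃ π : AutG G, π.1 u = v

/-- The automorphism `π̃` of `G̃` induced by an automorphism `π` of `G`: it fixes the four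
special vertices and maps `v^{(i)}` to `π(v)^{(i)}`. -/
def tildeMap {V : Type} {D : ℕ} (π : Equiv.Perm V) : TVert V D → TVert V D
  | Sum.inl i => Sum.inl i
  | Sum.inr (v, i) => Sum.inr (π v, i)

/-- The symmetrization `f̄(x) = |Aut(G)|^{-1/2} (f(π̃ x))_{π ∈ Aut(G)}` of a map
`f : V(G̃) → H`, taking values in `ℓ₂(Aut(G); H)`. -/
noncomputable def symHilb {V : Type} [Fintype V] [LinearOrder V] (G : SimpleGraph V) (D : ℕ)
    {H : Type} [NormedAddCommGroup H] [NormedSpace ℝ H] (f : TVert V D → H) :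
    TVert V D → PiLp 2 (fun _ : AutG G => H) :=
  fun x => (WithLp.equiv 2 (∀ _ : AutG G, H)).symm
    (fun π => (Real.sqrt (Fintype.card (AutG G)))⁻¹ • f (tildeMap π.1 x))

/-- The `p`-symmetrization `f̄(x) = |Aut(G)|^{-1/p} (f(π̃ x))_{π ∈ Aut(G)}` of a map
`f : V(G̃) → E`, taking values in the `p`-direct sum `ℓ_p(Aut(G); E)`. -/
noncomputable def symLp {V : Type} [Fintype V] [LinearOrder V] (G : SimpleGraph V) (D : ℕ)
    (p : ℝ) {E : Type} [NormedAddCommGroup E] [NormedSpace ℝ E] (f : TVert V D → E) :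
    TVert V D → PiLp (ENNReal.ofReal p) (fun _ : AutG G => E) :=
  fun x => (WithLp.equiv (ENNReal.ofReal p) (∀ _ : AutG G, E)).symm
    (fun π => ((Fintype.card (AutG G) : ℝ) ^ (-(1/p))) • f (tildeMap π.1 x))

end Symmetry

section Aux

/-- Right multiplication by a fixed automorphism, as an equivalence of `AutG G`. -/
def autMulRight {V : Type} {G : SimpleGraph V} (σ : AutG G) : AutG G ≃ AutG G where
  toFun π := ⟨π.1 * σ.1, fun a b => by
    simp only [Equiv.Perm.mul_apply, π.2, σ.2]⟩
  invFun π := ⟨π.1 * σ.1⁻¹, fun a b => by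
    simp only [Equiv.Perm.mul_apply]
    rw [π.2, ← σ.2]
    simp⟩
  left_inv π := by ext a; simp
  right_inv π := by ext a; simp

instance autNonempty {V : Type} (G : SimpleGraph V) : Nonempty (AutG G) :=
  ⟨⟨1, fun a b => by simp⟩⟩

/-- Reindexing a sum over automorphisms. -/
lemma sum_aut_reindex {V : Type} [Fintype V] {G : SimpleGraph V} (σ : AutG G)
    {M : Type} [AddCommMonoid M] (g : Equiv.Perm V → M) :
    ∑ π : AutG G, g (π.1 * σ.1) = ∑ π : AutG G, g π.1 :=
  Fintype.sum_equiv (autMulRight σ) _ _ (fun π => rfl)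

lemma symHilb_sub_apply {V : Type} [Fintype V] [LinearOrder V] (G : SimpleGraph V) (D : ℕ)
    {H : Type} [NormedAddCommGroup H] [NormedSpace ℝ H] (f : TVert V D → H)
    (x y : TVert V D) (π : AutG G) :
    (symHilb G D f x - symHilb G D f y) π =
      (Real.sqrt (Fintype.card (AutG G)))⁻¹ • (f (tildeMap π.1 x) - f (tildeMap π.1 y)) := by
  rw [PiLp.sub_apply, smul_sub]
  simp [symHilb, WithLp.equiv_symm_apply, PiLp.toLp_apply]

lemma symHilb_norm_sq {V : Type} [Fintype V] [LinearOrder V] (G : SimpleGraph V) (D : ℕ)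
    {H : Type} [NormedAddCommGroup H] [InnerProductSpace ℝ H] (f : TVert V D → H)
    (x y : TVert V D) :
    ‖symHilb G D f x - symHilb G D f y‖ ^ 2 =
      ((Fintype.card (AutG G) : ℝ))⁻¹ *
        ∑ π : AutG G, ‖f (tildeMap π.1 x) - f (tildeMap π.1 y)‖ ^ 2 := by
  rw [PiLp.norm_sq_eq_of_L2, Finset.mul_sum]
  refine Finset.sum_congr rfl fun π _ => ?_
  rw [symHilb_sub_apply, norm_smul, mul_pow, norm_inv, Real.norm_eq_abs,
    abs_of_nonneg (Real.sqrt_nonneg _), inv_pow, Real.sq_sqrt (by positivity)]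

lemma tildeMap_inl {V : Type} {D : ℕ} (π : Equiv.Perm V) (i : Fin 4) :
    tildeMap (D := D) π (Sum.inl i) = Sum.inl i := rfl

lemma tildeMap_inr {V : Type} {D : ℕ} (π : Equiv.Perm V) (v : V) (i : Fin (D + 1)) :
    tildeMap π (Sum.inr (v, i)) = Sum.inr (π v, i) := rfl

lemma norm_eq_of_sq_eq {a b : ℝ} (ha : 0 ≤ a) (hb : 0 ≤ b) (h : a ^ 2 = b ^ 2) : a = b := by
  nlinarith

end Aux

open STGraph in
open scoped RealInnerProductSpace in
/-- Properties of the symmetrization `f̄` of a map `f : V(G̃) → H` into a real Hilbert space,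
for a vertex-transitive `G`: (1) `‖f̄(s) − f̄(t)‖ = ‖f(s) − f(t)‖`; (2) the distances from
`f̄(s)` to the first layer and from `f̄(t)` to the last layer do not depend on the vertex;
(3) `‖f̄(v^{(i)}) − f̄(v^{(i+1)})‖` does not depend on `v`; (4) differences of symmetrized
images within one layer are orthogonal to `f̄(s) − f̄(t)`. -/
theorem symmetrization_facts {V : Type} [Fintype V] [LinearOrder V] (G : SimpleGraph V)
    [DecidableRel G.Adj] (hconn : G.Connected) (D : ℕ) (hD : 1 ≤ D)
    (hdiam : IsDiameter G D) (htrans : VertexTransitive G)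
    (H : Type) [NormedAddCommGroup H] [InnerProductSpace ℝ H] [CompleteSpace H]
    (f : TVert V D → H) :
    (‖symHilb G D f (Sum.inl 0) - symHilb G D f (Sum.inl 3)‖ =
        ‖f (Sum.inl 0) - f (Sum.inl 3)‖) ∧
    (∀ u v : V,
      ‖symHilb G D f (Sum.inl 0) - symHilb G D f (Sum.inr (v, 0))‖ =
        ‖symHilb G D f (Sum.inl 0) - symHilb G D f (Sum.inr (u, 0))‖ ∧
      ‖symHilb G D f (Sum.inl 3) - symHilb G D f (Sum.inr (v, Fin.last D))‖ =
        ‖symHilb G D f (Sum.inl 3) - symHilb G D f (Sum.inr (u, Fin.last D))‖) ∧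
    (∀ (u v : V) (i : Fin D),
      ‖symHilb G D f (Sum.inr (v, i.castSucc)) - symHilb G D f (Sum.inr (v, i.succ))‖ =
        ‖symHilb G D f (Sum.inr (u, i.castSucc)) - symHilb G D f (Sum.inr (u, i.succ))‖) ∧
    (∀ (u v : V) (i : Fin (D + 1)),
      ⟪symHilb G D f (Sum.inl 0) - symHilb G D f (Sum.inl 3),
        symHilb G D f (Sum.inr (u, i)) - symHilb G D f (Sum.inr (v, i))⟫ = 0) := by
  classical
  have hcard : (0:ℝ) < (Fintype.card (AutG G) : ℝ) := by exact_mod_cast Fintype.card_pos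
  have key : ∀ (h : V → ℝ) (u v : V),
      (∑ π : AutG G, h (π.1 v)) = ∑ π : AutG G, h (π.1 u) := by
    intro h u v
    obtain ⟨σ, hσ⟩ := htrans u v
    rw [← hσ]
    simpa [Equiv.Perm.mul_apply] using sum_aut_reindex σ (fun ρ => h (ρ u))
  refine ⟨?_, ?_, ?_, ?_⟩
  · apply norm_eq_of_sq_eq (norm_nonneg _) (norm_nonneg _)
    rw [symHilb_norm_sq]
    simp only [tildeMap_inl, Finset.sum_const, Finset.card_univ, nsmul_eq_mul]
    rw [inv_mul_cancel_left₀ hcard.ne']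
  · intro u v
    constructor
    · apply norm_eq_of_sq_eq (norm_nonneg _) (norm_nonneg _)
      rw [symHilb_norm_sq, symHilb_norm_sq]
      simp only [tildeMap_inl, tildeMap_inr]
      congr 1
      exact key (fun w => ‖f (Sum.inl 0) - f (Sum.inr (w, 0))‖ ^ 2) u v
    · apply norm_eq_of_sq_eq (norm_nonneg _) (norm_nonneg _)
      rw [symHilb_norm_sq, symHilb_norm_sq]
      simp only [tildeMap_inl, tildeMap_inr]
      congr 1
      exact key (fun w => ‖f (Sum.inl 3) - f (Sum.inr (w, Fin.last D))‖ ^ 2) u v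
  · intro u v i
    apply norm_eq_of_sq_eq (norm_nonneg _) (norm_nonneg _)
    rw [symHilb_norm_sq, symHilb_norm_sq]
    simp only [tildeMap_inr]
    congr 1
    exact key (fun w => ‖f (Sum.inr (w, i.castSucc)) - f (Sum.inr (w, i.succ))‖ ^ 2) u v
  · intro u v i
    have hs : (∑ π : AutG G,
          ⟪f (Sum.inl 0) - f (Sum.inl 3), f (Sum.inr (π.1 v, i))⟫) =
        ∑ π : AutG G, ⟪f (Sum.inl 0) - f (Sum.inl 3), f (Sum.inr (π.1 u, i))⟫ :=
      key (fun w => ⟪f (Sum.inl 0) - f (Sum.inl 3), f (Sum.inr (w, i))⟫) u v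
    rw [PiLp.inner_apply]
    simp only [symHilb_sub_apply, tildeMap_inl, tildeMap_inr, real_inner_smul_left,
      real_inner_smul_right, inner_sub_right, mul_sub]
    rw [Finset.sum_sub_distrib, ← Finset.mul_sum, ← Finset.mul_sum, ← Finset.mul_sum,
      ← Finset.mul_sum, hs, sub_self]
end
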